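/- There exists a constant C > 0 with the following property. Let s and D be positive integers with s odd, s ≥ 3D, and s/(D·log D) ≥ C. Let x_0 be the unique positive real root of (X+3)^D (X+1)^{s+1} - X^D (X+2)^{s+1}, and let g(x) = D^{3D} · (x+3)^{3D} (x+1)^{s+1} / (x+2)^{2(s+1)}. Then g(x_0) < 3^{-(s+1)}. -/

import Mathlib

set_option maxHeartbeats 1000000

theorem stmt13 :
    ∃ C : ℝ, 0 < C ∧ ∀ s D : ℕ, 0 < s → 0 < D → Odd s → 3 * D ≤ s →
      C ≤ (s : ℝ) / (D * Real.log D) →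
      ∀ x0 : ℝ, 0 < x0 →
        (x0 + 3) ^ D * (x0 + 1) ^ (s + 1) = x0 ^ D * (x0 + 2) ^ (s + 1) →
        (D : ℝ) ^ (3 * D) * (x0 + 3) ^ (3 * D) * (x0 + 1) ^ (s + 1) /
            (x0 + 2) ^ (2 * (s + 1)) < (3 : ℝ) ^ (-((s : ℤ) + 1)) := by
  refine ⟨100, by norm_num, ?_⟩
  intro s D hs hD _hodd _h3D hC x0 hx0 hEq
  -- D ≥ 2
  have hD2 : 2 ≤ D := by
    by_contra h
    push_neg at h
    interval_cases D
    · simp [Real.log_one] at hC; linarith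
  have hDR : (2:ℝ) ≤ D := by exact_mod_cast hD2
  have hlogD : Real.log 2 ≤ Real.log D := Real.log_le_log (by norm_num) hDR
  have hlog2 : (0.69:ℝ) ≤ Real.log 2 := by
    have := Real.log_two_gt_d9; linarith
  have hlogDpos : 0 < Real.log D := lt_of_lt_of_le (by norm_num) (le_trans hlog2 hlogD)
  have hden : (0:ℝ) < D * Real.log D := by positivity
  have hsD : 100 * ((D:ℝ) * Real.log D) ≤ s := (le_div_iff₀ hden).mp hC
  have hs69 : 69 * (D:ℝ) ≤ s := by nlinarith
  have hsR : (0:ℝ) < s := by exact_mod_cast hs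
  -- positivity facts
  have h1 : (0:ℝ) < x0 + 1 := by linarith
  have h2 : (0:ℝ) < x0 + 2 := by linarith
  have h3 : (0:ℝ) < x0 + 3 := by linarith
  have hDpos : (0:ℝ) < D := by linarith
  -- take logs of the equation
  have hlogEq : (D:ℝ) * Real.log (x0+3) + (s+1) * Real.log (x0+1)
      = D * Real.log x0 + (s+1) * Real.log (x0+2) := by
    have := congrArg Real.log hEq
    rw [Real.log_mul (by positivity) (by positivity),
        Real.log_mul (by positivity) (by positivity),
        Real.log_pow, Real.log_pow, Real.log_pow, Real.log_pow] at this
    push_cast at this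
    linarith
  -- bound x0 ≤ 1
  have hx1 : x0 ≤ 1 := by
    have hA : 1/(x0+2) ≤ Real.log (x0+2) - Real.log (x0+1) := by
      rw [← Real.log_div (by positivity) (by positivity)]
      have := Real.one_sub_inv_le_log_of_pos (x := (x0+2)/(x0+1)) (by positivity)
      have hinv : ((x0+2)/(x0+1))⁻¹ = (x0+1)/(x0+2) := by
        rw [inv_div]
      rw [hinv] at this
      have : 1 - (x0+1)/(x0+2) ≤ Real.log ((x0+2)/(x0+1)) := this
      have heq1 : 1 - (x0+1)/(x0+2) = 1/(x0+2) := by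
        field_simp
        try norm_num
      linarith [heq1 ▸ this]
    have hB : Real.log (x0+3) - Real.log x0 ≤ 3/x0 := by
      rw [← Real.log_div (by positivity) (by positivity)]
      have := Real.log_le_sub_one_of_pos (x := (x0+3)/x0) (by positivity)
      have heq2 : (x0+3)/x0 - 1 = 3/x0 := by field_simp; ring
      linarith [heq2 ▸ this]
    have hchain : ((s:ℝ)+1) / (x0+2) ≤ 3 * (D:ℝ) / x0 := by
      have e : ((s:ℝ)+1) * (Real.log (x0+2) - Real.log (x0+1))
          = D * (Real.log (x0+3) - Real.log x0) := by linarith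
      calc ((s:ℝ)+1) / (x0+2) = ((s:ℝ)+1) * (1/(x0+2)) := by ring
        _ ≤ ((s:ℝ)+1) * (Real.log (x0+2) - Real.log (x0+1)) := by
            apply mul_le_mul_of_nonneg_left hA (by positivity)
        _ = D * (Real.log (x0+3) - Real.log x0) := e
        _ ≤ D * (3/x0) := mul_le_mul_of_nonneg_left hB (le_of_lt hDpos)
        _ = 3 * (D:ℝ) / x0 := by ring
    have hchain' : ((s:ℝ)+1) * x0 ≤ 3 * (D:ℝ) * (x0+2) := by
      rw [div_le_div_iff₀ h2 hx0] at hchain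
      linarith
    nlinarith
  -- key inequality: (4D)^(3D) < (4/3)^(s+1)
  have hkey : (4 * (D:ℝ)) ^ (3*D) < (4/3 : ℝ) ^ (s+1) := by
    rw [← Real.log_lt_log_iff (by positivity) (by positivity)]
    rw [Real.log_pow, Real.log_pow]
    have hlog4D : Real.log (4*D) ≤ 3 * Real.log D := by
      rw [Real.log_mul (by norm_num) (by positivity)]
      have : Real.log 4 = 2 * Real.log 2 := by
        rw [show (4:ℝ) = 2^2 by norm_num, Real.log_pow]; push_cast; ring
      linarith
    have hlog43 : (1/4 : ℝ) ≤ Real.log (4/3) := by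
      have := Real.one_sub_inv_le_log_of_pos (x := (4/3:ℝ)) (by norm_num)
      norm_num at this
      linarith
    have hl : (↑(3*D):ℝ) * Real.log (4*D) ≤ 9 * (D * Real.log D) := by
      push_cast
      nlinarith [hlog4D, hDpos]
    have hr : 9 * ((D:ℝ) * Real.log D) < (↑(s+1):ℝ) * Real.log (4/3) := by
      push_cast
      nlinarith
    linarith
  -- conclude
  have hx3 : x0 + 3 ≤ 4 := by linarith
  have hstep1 : (D:ℝ)^(3*D) * (x0+3)^(3*D) ≤ (4*(D:ℝ))^(3*D) := by
    rw [mul_pow]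
    rw [mul_comm ((D:ℝ)^(3*D))]
    apply mul_le_mul_of_nonneg_right _ (by positivity)
    exact pow_le_pow_left₀ (by linarith) hx3 _
  have hstep3 : (4/3:ℝ)^(s+1) * (3*(x0+1))^(s+1) ≤ (x0+2)^(2*(s+1)) := by
    rw [← mul_pow, pow_mul]
    have hb : (4/3:ℝ)*(3*(x0+1)) ≤ (x0+2)^2 := by nlinarith [sq_nonneg x0]
    exact pow_le_pow_left₀ (by positivity) hb _
  have hpos31 : (0:ℝ) < (3*(x0+1))^(s+1) := by positivity
  have hkey2 : (D:ℝ)^(3*D) * (x0+3)^(3*D) * (3*(x0+1))^(s+1) < (x0+2)^(2*(s+1)) := by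
    calc (D:ℝ)^(3*D) * (x0+3)^(3*D) * (3*(x0+1))^(s+1)
        ≤ (4*(D:ℝ))^(3*D) * (3*(x0+1))^(s+1) :=
          mul_le_mul_of_nonneg_right hstep1 (le_of_lt hpos31)
      _ < (4/3:ℝ)^(s+1) * (3*(x0+1))^(s+1) :=
          mul_lt_mul_of_pos_right hkey hpos31
      _ ≤ (x0+2)^(2*(s+1)) := hstep3
  have h3pow : (3:ℝ) ^ (-((s:ℤ)+1)) = 1 / (3:ℝ)^(s+1) := by
    rw [show -((s:ℤ)+1) = -((s+1 : ℕ) : ℤ) by push_cast; ring,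
        zpow_neg, zpow_natCast, one_div]
  rw [h3pow, div_lt_div_iff₀ (by positivity) (by positivity), one_mul]
  have hid : (D:ℝ)^(3*D) * (x0+3)^(3*D) * (x0+1)^(s+1) * 3^(s+1)
      = (D:ℝ)^(3*D) * (x0+3)^(3*D) * (3*(x0+1))^(s+1) := by
    rw [mul_pow]; ring
  linarith [hid, hkey2]
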